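/- For the system Ỹ' = (Σ₀ − ỸX̃)X̃ᵀ, X̃' = Ỹᵀ(Σ₀ − ỸX̃) with Σ₀ diagonal, if Ỹ(0) has nonzero entries only in positions (i,i) for i ≤ r and X̃(0) has nonzero entries only in positions (i,i) for i ≤ r, then Ỹ(t) and X̃(t) retain this 'diagonal' sparsity pattern for all t ≥ 0, so the dynamics decouple into r independent scalar systems. -/

import Mathlib

open Matrix

attribute [local instance] Matrix.normedAddCommGroup Matrix.normedSpace

/-- The continuous linear map zeroing out the diagonal entries. -/
noncomputable def offdiagCLM (p q : ℕ) :
    Matrix (Fin p) (Fin q) ℝ →L[ℝ] Matrix (Fin p) (Fin q) ℝ :=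
  LinearMap.toContinuousLinearMap
    { toFun := fun A => Matrix.of fun i j => if (i : ℕ) = (j : ℕ) then 0 else A i j
      map_add' := by
        intro A B; ext i j
        by_cases h : (i : ℕ) = (j : ℕ) <;> simp [h]
      map_smul' := by
        intro c A; ext i j
        by_cases h : (i : ℕ) = (j : ℕ) <;> simp [h] }

lemma offdiagCLM_apply {p q : ℕ} (A : Matrix (Fin p) (Fin q) ℝ) (i : Fin p) (j : Fin q) :
    offdiagCLM p q A i j = if (i : ℕ) = (j : ℕ) then 0 else A i j := rfl

lemma abs_mul3_le {a b d x y z : ℝ} (ha : |a| ≤ x) (hb : |b| ≤ y) (hd : |d| ≤ z) :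
    |a * b * d| ≤ x * y * z := by
  rw [abs_mul, abs_mul]
  exact mul_le_mul (mul_le_mul ha hb (abs_nonneg _) ((abs_nonneg a).trans ha)) hd
    (abs_nonneg _) (mul_nonneg ((abs_nonneg a).trans ha) ((abs_nonneg b).trans hb))

lemma lora_bound_Y {n m r : ℕ} (S₀ : Matrix (Fin n) (Fin m) ℝ)
    (hS : ∀ (i : Fin n) (j : Fin m), (i : ℕ) ≠ (j : ℕ) → S₀ i j = 0)
    (A : Matrix (Fin n) (Fin r) ℝ) (B : Matrix (Fin r) (Fin m) ℝ) (M c : ℝ)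
    (hM0 : 0 ≤ M) (hc0 : 0 ≤ c)
    (hSM : ∀ i j, |S₀ i j| ≤ M) (hA : ∀ i j, |A i j| ≤ M) (hB : ∀ i j, |B i j| ≤ M)
    (hAc : ∀ (i : Fin n) (j : Fin r), (i : ℕ) ≠ (j : ℕ) → |A i j| ≤ c)
    (hBc : ∀ (i : Fin r) (j : Fin m), (i : ℕ) ≠ (j : ℕ) → |B i j| ≤ c)
    (i : Fin n) (j : Fin r) (hij : (i : ℕ) ≠ (j : ℕ)) :
    |((S₀ - A * B) * Bᵀ) i j| ≤ ((m : ℝ) * (M + (r : ℝ) * (M * M))) * c := by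
  have hentry : ((S₀ - A * B) * Bᵀ) i j
      = ∑ k, (S₀ i k - ∑ l, A i l * B l k) * B j k := by
    simp [Matrix.mul_apply, Matrix.sub_apply, Matrix.transpose_apply]
  rw [hentry]
  have hterm : ∀ k : Fin m, |(S₀ i k - ∑ l, A i l * B l k) * B j k|
      ≤ M * c + (r : ℝ) * (M * M * c) := by
    intro k
    rw [sub_mul, Finset.sum_mul]
    refine (abs_sub _ _).trans (add_le_add ?_ ?_)
    · -- |S₀ i k * B j k| ≤ M * c
      rcases eq_or_ne (i : ℕ) (k : ℕ) with h | h
      · have hjk : (j : ℕ) ≠ (k : ℕ) := fun hc' => hij (h.trans hc'.symm)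
        rw [abs_mul]
        exact mul_le_mul (hSM _ _) (hBc _ _ hjk) (abs_nonneg _) hM0
      · rw [hS i k h]; simpa using mul_nonneg hM0 hc0
    · -- |∑ l, A i l * B l k * B j k| ≤ r * (M * M * c)
      refine (Finset.abs_sum_le_sum_abs _ _).trans ?_
      have hl : ∀ l : Fin r, |A i l * B l k * B j k| ≤ M * M * c := by
        intro l
        rcases eq_or_ne (i : ℕ) (l : ℕ) with hil | hil
        · rcases eq_or_ne (l : ℕ) (k : ℕ) with hlk | hlk
          · -- i = l = k, so j ≠ k
            have hjk : (j : ℕ) ≠ (k : ℕ) := fun hc' => hij (hil.trans (hlk.trans hc'.symm))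
            exact abs_mul3_le (hA _ _) (hB _ _) (hBc _ _ hjk)
          · calc |A i l * B l k * B j k| ≤ M * c * M :=
                  abs_mul3_le (hA _ _) (hBc _ _ hlk) (hB _ _)
              _ = M * M * c := by ring
        · calc |A i l * B l k * B j k| ≤ c * M * M :=
                abs_mul3_le (hAc _ _ hil) (hB _ _) (hB _ _)
            _ = M * M * c := by ring
      calc ∑ l, |A i l * B l k * B j k| ≤ ∑ _l : Fin r, M * M * c :=
            Finset.sum_le_sum fun l _ => hl l
        _ = (r : ℝ) * (M * M * c) := by
            simp [Finset.sum_const, Finset.card_univ, nsmul_eq_mul]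
  calc |∑ k, (S₀ i k - ∑ l, A i l * B l k) * B j k|
      ≤ ∑ k, |(S₀ i k - ∑ l, A i l * B l k) * B j k| := Finset.abs_sum_le_sum_abs _ _
    _ ≤ ∑ _k : Fin m, (M * c + (r : ℝ) * (M * M * c)) :=
        Finset.sum_le_sum fun k _ => hterm k
    _ = (m : ℝ) * (M * c + (r : ℝ) * (M * M * c)) := by
        simp [Finset.sum_const, Finset.card_univ, nsmul_eq_mul]; ring
    _ = ((m : ℝ) * (M + (r : ℝ) * (M * M))) * c := by ring

lemma lora_bound_X {n m r : ℕ} (S₀ : Matrix (Fin n) (Fin m) ℝ)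
    (hS : ∀ (i : Fin n) (j : Fin m), (i : ℕ) ≠ (j : ℕ) → S₀ i j = 0)
    (A : Matrix (Fin n) (Fin r) ℝ) (B : Matrix (Fin r) (Fin m) ℝ) (M c : ℝ)
    (hM0 : 0 ≤ M) (hc0 : 0 ≤ c)
    (hSM : ∀ i j, |S₀ i j| ≤ M) (hA : ∀ i j, |A i j| ≤ M) (hB : ∀ i j, |B i j| ≤ M)
    (hAc : ∀ (i : Fin n) (j : Fin r), (i : ℕ) ≠ (j : ℕ) → |A i j| ≤ c)
    (hBc : ∀ (i : Fin r) (j : Fin m), (i : ℕ) ≠ (j : ℕ) → |B i j| ≤ c)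
    (i : Fin r) (j : Fin m) (hij : (i : ℕ) ≠ (j : ℕ)) :
    |(Aᵀ * (S₀ - A * B)) i j| ≤ ((n : ℝ) * (M + (r : ℝ) * (M * M))) * c := by
  have hentry : (Aᵀ * (S₀ - A * B)) i j
      = ∑ k, A k i * (S₀ k j - ∑ l, A k l * B l j) := by
    simp [Matrix.mul_apply, Matrix.sub_apply, Matrix.transpose_apply]
  rw [hentry]
  have hterm : ∀ k : Fin n, |A k i * (S₀ k j - ∑ l, A k l * B l j)|
      ≤ M * c + (r : ℝ) * (M * M * c) := by
    intro k
    rw [mul_sub, Finset.mul_sum]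
    refine (abs_sub _ _).trans (add_le_add ?_ ?_)
    · rcases eq_or_ne (k : ℕ) (j : ℕ) with h | h
      · have hki : (k : ℕ) ≠ (i : ℕ) := fun hc' => hij (hc'.symm.trans h)
        calc |A k i * S₀ k j| ≤ c * M := by
              rw [abs_mul]
              exact mul_le_mul (hAc _ _ hki) (hSM _ _) (abs_nonneg _) hc0
          _ = M * c := by ring
      · rw [hS k j h]; simpa using mul_nonneg hM0 hc0
    · refine (Finset.abs_sum_le_sum_abs _ _).trans ?_
      have hl : ∀ l : Fin r, |A k i * (A k l * B l j)| ≤ M * M * c := by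
        intro l
        rw [← mul_assoc]
        rcases eq_or_ne (k : ℕ) (i : ℕ) with hki | hki
        · rcases eq_or_ne (k : ℕ) (l : ℕ) with hkl | hkl
          · have hlj : (l : ℕ) ≠ (j : ℕ) := fun hc' =>
              hij (hki.symm.trans (hkl.trans hc'))
            exact abs_mul3_le (hA _ _) (hA _ _) (hBc _ _ hlj)
          · calc |A k i * A k l * B l j| ≤ M * c * M :=
                  abs_mul3_le (hA _ _) (hAc _ _ hkl) (hB _ _)
              _ = M * M * c := by ring
        · calc |A k i * A k l * B l j| ≤ c * M * M :=
                abs_mul3_le (hAc _ _ hki) (hA _ _) (hB _ _)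
            _ = M * M * c := by ring
      calc ∑ l, |A k i * (A k l * B l j)| ≤ ∑ _l : Fin r, M * M * c :=
            Finset.sum_le_sum fun l _ => hl l
        _ = (r : ℝ) * (M * M * c) := by
            simp [Finset.sum_const, Finset.card_univ, nsmul_eq_mul]
  calc |∑ k, A k i * (S₀ k j - ∑ l, A k l * B l j)|
      ≤ ∑ k, |A k i * (S₀ k j - ∑ l, A k l * B l j)| := Finset.abs_sum_le_sum_abs _ _
    _ ≤ ∑ _k : Fin n, (M * c + (r : ℝ) * (M * M * c)) :=
        Finset.sum_le_sum fun k _ => hterm k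
    _ = (n : ℝ) * (M * c + (r : ℝ) * (M * M * c)) := by
        simp [Finset.sum_const, Finset.card_univ, nsmul_eq_mul]; ring
    _ = ((n : ℝ) * (M + (r : ℝ) * (M * M))) * c := by ring

/-- For `Ỹ' = (S₀ − ỸX̃)X̃ᵀ`, `X̃' = Ỹᵀ(S₀ − ỸX̃)` with `S₀` diagonal, if
`Ỹ(0)` and `X̃(0)` are supported only on diagonal positions `(i,i)`, then
`Ỹ(t)` and `X̃(t)` retain this sparsity pattern for all `t ≥ 0`, so the
dynamics decouple into independent scalar systems. -/
theorem lora_flow_diagonal_invariant {n m r : ℕ}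
    (S₀ : Matrix (Fin n) (Fin m) ℝ)
    (hS : ∀ (i : Fin n) (j : Fin m), (i : ℕ) ≠ (j : ℕ) → S₀ i j = 0)
    (Y : ℝ → Matrix (Fin n) (Fin r) ℝ) (X : ℝ → Matrix (Fin r) (Fin m) ℝ)
    (hY : ∀ t : ℝ, HasDerivAt Y ((S₀ - Y t * X t) * (X t)ᵀ) t)
    (hX : ∀ t : ℝ, HasDerivAt X ((Y t)ᵀ * (S₀ - Y t * X t)) t)
    (hY0 : ∀ (i : Fin n) (j : Fin r), (i : ℕ) ≠ (j : ℕ) → Y 0 i j = 0)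
    (hX0 : ∀ (i : Fin r) (j : Fin m), (i : ℕ) ≠ (j : ℕ) → X 0 i j = 0) :
    ∀ t : ℝ, 0 ≤ t →
      (∀ (i : Fin n) (j : Fin r), (i : ℕ) ≠ (j : ℕ) → Y t i j = 0) ∧
      (∀ (i : Fin r) (j : Fin m), (i : ℕ) ≠ (j : ℕ) → X t i j = 0) := by
  intro T hT
  -- continuity of Y and X
  have hYc : Continuous Y := continuous_iff_continuousAt.mpr fun t => (hY t).continuousAt
  have hXc : Continuous X := continuous_iff_continuousAt.mpr fun t => (hX t).continuousAt
  -- a bound on everything on [0, T]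
  obtain ⟨MY, hMY⟩ := (isCompact_Icc (a := (0:ℝ)) (b := T)).exists_bound_of_continuousOn
    hYc.continuousOn
  obtain ⟨MX, hMX⟩ := (isCompact_Icc (a := (0:ℝ)) (b := T)).exists_bound_of_continuousOn
    hXc.continuousOn
  set M : ℝ := max 0 (max ‖S₀‖ (max MY MX)) with hMdef
  have hM0 : 0 ≤ M := le_max_left _ _
  have hSM : ∀ (i : Fin n) (j : Fin m), |S₀ i j| ≤ M := fun i j =>
    (Matrix.norm_entry_le_entrywise_sup_norm S₀).trans
      ((le_max_left _ _).trans (le_max_right _ _))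
  -- the off-diagonal part as a curve in a product space
  set f : ℝ → Matrix (Fin n) (Fin r) ℝ × Matrix (Fin r) (Fin m) ℝ :=
    fun s => (offdiagCLM n r (Y s), offdiagCLM r m (X s)) with hfdef
  set f' : ℝ → Matrix (Fin n) (Fin r) ℝ × Matrix (Fin r) (Fin m) ℝ :=
    fun s => (offdiagCLM n r ((S₀ - Y s * X s) * (X s)ᵀ),
              offdiagCLM r m ((Y s)ᵀ * (S₀ - Y s * X s))) with hf'def
  have hf' : ∀ s : ℝ, HasDerivAt f (f' s) s := fun s =>
    (HasDerivAt.prodMk ((offdiagCLM n r).hasFDerivAt.comp_hasDerivAt s (hY s))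
      ((offdiagCLM r m).hasFDerivAt.comp_hasDerivAt s (hX s)))
  set K : ℝ := ((n : ℝ) + (m : ℝ)) * (M + (r : ℝ) * (M * M)) with hKdef
  have hK0 : 0 ≤ K := by positivity
  -- Grönwall bound
  have hcont : ContinuousOn f (Set.Icc 0 T) :=
    (((offdiagCLM n r).continuous.comp hYc).prodMk
      ((offdiagCLM r m).continuous.comp hXc)).continuousOn
  have hderiv : ∀ s ∈ Set.Ico (0:ℝ) T, HasDerivWithinAt f (f' s) (Set.Ici s) s :=
    fun s _ => (hf' s).hasDerivWithinAt
  have h0 : ‖f 0‖ ≤ 0 := by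
    have h1 : offdiagCLM n r (Y 0) = 0 := by
      ext i j
      rw [offdiagCLM_apply]
      split
      · rfl
      · simpa using hY0 i j (by assumption)
    have h2 : offdiagCLM r m (X 0) = 0 := by
      ext i j
      rw [offdiagCLM_apply]
      split
      · rfl
      · simpa using hX0 i j (by assumption)
    have hf0 : f 0 = 0 := by
      simp only [hfdef, h1, h2, Prod.mk_eq_zero, and_self]
    rw [hf0, norm_zero]
  have hbound : ∀ s ∈ Set.Ico (0:ℝ) T, ‖f' s‖ ≤ K * ‖f s‖ + 0 := by
    intro s hs
    have hsI : s ∈ Set.Icc (0:ℝ) T := Set.Ico_subset_Icc_self hs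
    set c : ℝ := ‖f s‖ with hcdef
    have hc0 : 0 ≤ c := norm_nonneg _
    have hKc0 : 0 ≤ K * c := mul_nonneg hK0 hc0
    have hA : ∀ (i : Fin n) (j : Fin r), |Y s i j| ≤ M := fun i j =>
      (Matrix.norm_entry_le_entrywise_sup_norm (Y s)).trans
        ((hMY s hsI).trans (((le_max_left _ _).trans (le_max_right _ _)).trans
          (le_max_right _ _)))
    have hB : ∀ (i : Fin r) (j : Fin m), |X s i j| ≤ M := fun i j =>
      (Matrix.norm_entry_le_entrywise_sup_norm (X s)).trans
        ((hMX s hsI).trans (((le_max_right _ _).trans (le_max_right _ _)).trans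
          (le_max_right _ _)))
    have hAc : ∀ (i : Fin n) (j : Fin r), (i : ℕ) ≠ (j : ℕ) → |Y s i j| ≤ c := by
      intro i j hij
      have h1 : Y s i j = (f s).1 i j := by
        simp [hfdef, offdiagCLM_apply, hij]
      rw [h1]
      exact (Matrix.norm_entry_le_entrywise_sup_norm (f s).1).trans (norm_fst_le (f s))
    have hBc : ∀ (i : Fin r) (j : Fin m), (i : ℕ) ≠ (j : ℕ) → |X s i j| ≤ c := by
      intro i j hij
      have h1 : X s i j = (f s).2 i j := by
        simp [hfdef, offdiagCLM_apply, hij]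
      rw [h1]
      exact (Matrix.norm_entry_le_entrywise_sup_norm (f s).2).trans (norm_snd_le (f s))
    have goal1 : ‖offdiagCLM n r ((S₀ - Y s * X s) * (X s)ᵀ)‖ ≤ K * c := by
      rw [Matrix.norm_le_iff hKc0]
      intro i j
      rw [Real.norm_eq_abs, offdiagCLM_apply]
      split
      · simpa using hKc0
      · refine (lora_bound_Y S₀ hS (Y s) (X s) M c hM0 hc0 hSM hA hB hAc hBc i j
          (by assumption)).trans ?_
        have hnm : (m : ℝ) ≤ (n : ℝ) + (m : ℝ) := le_add_of_nonneg_left (Nat.cast_nonneg n)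
        have hMr : 0 ≤ M + (r : ℝ) * (M * M) := by positivity
        nlinarith [mul_le_mul_of_nonneg_right (mul_le_mul_of_nonneg_right hnm hMr) hc0]
    have goal2 : ‖offdiagCLM r m ((Y s)ᵀ * (S₀ - Y s * X s))‖ ≤ K * c := by
      rw [Matrix.norm_le_iff hKc0]
      intro i j
      rw [Real.norm_eq_abs, offdiagCLM_apply]
      split
      · simpa using hKc0
      · refine (lora_bound_X S₀ hS (Y s) (X s) M c hM0 hc0 hSM hA hB hAc hBc i j
          (by assumption)).trans ?_
        have hnm : (n : ℝ) ≤ (n : ℝ) + (m : ℝ) := le_add_of_nonneg_right (Nat.cast_nonneg m)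
        have hMr : 0 ≤ M + (r : ℝ) * (M * M) := by positivity
        nlinarith [mul_le_mul_of_nonneg_right (mul_le_mul_of_nonneg_right hnm hMr) hc0]
    rw [add_zero]
    simp only [hf'def]
    rw [Prod.norm_def]
    exact max_le goal1 goal2
  have hgron := norm_le_gronwallBound_of_norm_deriv_right_le hcont hderiv h0 hbound T
    ⟨hT, le_refl T⟩
  rw [gronwallBound_ε0_δ0] at hgron
  have hfT : f T = 0 := norm_le_zero_iff.mp hgron
  have hfT1 : offdiagCLM n r (Y T) = 0 := congrArg Prod.fst hfT
  have hfT2 : offdiagCLM r m (X T) = 0 := congrArg Prod.snd hfT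
  constructor
  · intro i j hij
    have h1 := congrFun (congrFun hfT1 i) j
    rw [offdiagCLM_apply] at h1
    simpa [hij] using h1
  · intro i j hij
    have h1 := congrFun (congrFun hfT2 i) j
    rw [offdiagCLM_apply] at h1
    simpa [hij] using h1
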